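/- arXiv:0807.3265 — 3 statements merged into one kernel-verified Lean document; each statement's English description precedes it below -/
import Mathlib

section
/- Let b < 0, c > 0, and let h : [0, z₀) → ℝ be continuously differentiable with h(0) > 0 and satisfying x·h'(x) + x·h(x)² + c·h(x) + b(1-b)/(1-x)² = 0 for all x ∈ [0, z₀), where z₀ ∈ (0,1]. Then h(x) > 0 for all x ∈ [0, z₀). -/
/-- If `b < 0`, `c > 0`, `h` is continuously differentiable on `[0,z₀)` with
`h 0 > 0` and satisfies `x h'(x) + x h(x)² + c h(x) + b(1-b)/(1-x)² = 0` on `[0,z₀)`,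
where `z₀ ∈ (0,1]`, then `h > 0` on `[0,z₀)`. -/
theorem stmt4 (b c z₀ : ℝ) (hb : b < 0) (hc : 0 < c) (hz₀ : z₀ ∈ Set.Ioc (0:ℝ) 1)
    (h h' : ℝ → ℝ)
    (hderiv : ∀ x ∈ Set.Ico (0:ℝ) z₀, HasDerivAt h (h' x) x)
    (hcont : ContinuousOn h' (Set.Ico (0:ℝ) z₀))
    (h0 : 0 < h 0)
    (hODE : ∀ x ∈ Set.Ico (0:ℝ) z₀,
      x * h' x + x * (h x) ^ 2 + c * h x + b * (1 - b) / (1 - x) ^ 2 = 0) :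
    ∀ x ∈ Set.Ico (0:ℝ) z₀, 0 < h x := by
  by_contra hconf
  push_neg at hconf
  obtain ⟨y, hy, hhy⟩ := hconf
  set S : Set ℝ := {x | x ∈ Set.Ico (0:ℝ) z₀ ∧ h x ≤ 0} with hS
  have hSne : S.Nonempty := ⟨y, hy, hhy⟩
  have hSbdd : BddBelow S := ⟨0, fun s hs => hs.1.1⟩
  set x₀ := sInf S with hx₀def
  have hx₀0 : 0 ≤ x₀ := le_csInf hSne fun s hs => hs.1.1
  obtain ⟨s, hs⟩ := hSne
  have hx₀lt : x₀ < z₀ := lt_of_le_of_lt (csInf_le hSbdd hs) hs.1.2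
  -- x₀ > 0
  have hcont0 : ContinuousAt h 0 := (hderiv 0 ⟨le_refl 0, hz₀.1⟩).continuousAt
  obtain ⟨δ, hδpos, hδ⟩ := Metric.eventually_nhds_iff.mp
    (hcont0.eventually (eventually_gt_nhds h0))
  have hδle : ∀ t ∈ S, δ ≤ t := by
    intro t ht
    by_contra hlt
    push_neg at hlt
    have hdt : dist t 0 < δ := by
      rw [Real.dist_eq, sub_zero, abs_of_nonneg ht.1.1]; exact hlt
    exact absurd (hδ hdt) (not_lt.mpr ht.2)
  have hx₀pos : 0 < x₀ := lt_of_lt_of_le hδpos (le_csInf ⟨s, hs⟩ hδle)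
  have hx₀mem : x₀ ∈ Set.Ico (0:ℝ) z₀ := ⟨hx₀0, hx₀lt⟩
  have hcontx : ContinuousAt h x₀ := (hderiv x₀ hx₀mem).continuousAt
  -- everything in [0, x₀) has h > 0
  have hpos : ∀ x ∈ Set.Ico (0:ℝ) x₀, 0 < h x := by
    intro x hx
    by_contra hle
    push_neg at hle
    have hxS : x ∈ S := ⟨⟨hx.1, lt_trans hx.2 hx₀lt⟩, hle⟩
    exact absurd (csInf_le hSbdd hxS) (not_le.mpr hx.2)
  -- h x₀ ≤ 0
  have hle0 : h x₀ ≤ 0 := by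
    by_contra hgt
    push_neg at hgt
    obtain ⟨ε, hεpos, hε⟩ := Metric.eventually_nhds_iff.mp
      (hcontx.eventually (eventually_gt_nhds hgt))
    obtain ⟨t, htS, htlt⟩ := (csInf_lt_iff hSbdd ⟨s, hs⟩).mp
      (lt_add_of_pos_right x₀ hεpos)
    have hdt : dist t x₀ < ε := by
      rw [Real.dist_eq, abs_of_nonneg (sub_nonneg.mpr (csInf_le hSbdd htS))]
      linarith
    exact absurd (hε hdt) (not_lt.mpr htS.2)
  -- h x₀ ≥ 0 from left continuity
  have hIoo : Set.Ioo 0 x₀ ∈ nhdsWithin x₀ (Set.Iio x₀) :=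
    Ioo_mem_nhdsLT_of_mem ⟨hx₀pos, le_refl x₀⟩
  have hge0 : 0 ≤ h x₀ := by
    have htend : Filter.Tendsto h (nhdsWithin x₀ (Set.Iio x₀)) (nhds (h x₀)) :=
      hcontx.continuousWithinAt
    refine ge_of_tendsto htend ?_
    filter_upwards [hIoo] with x hx
    exact (hpos x ⟨le_of_lt hx.1, hx.2⟩).le
  have heq0 : h x₀ = 0 := le_antisymm hle0 hge0
  -- derivative at x₀ is ≤ 0
  have hslope := hasDerivAt_iff_tendsto_slope.mp (hderiv x₀ hx₀mem)
  have hslope' : Filter.Tendsto (slope h x₀) (nhdsWithin x₀ (Set.Iio x₀)) (nhds (h' x₀)) :=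
    hslope.mono_left (nhdsWithin_mono x₀ (fun t ht => ne_of_lt ht))
  have hd_le : h' x₀ ≤ 0 := by
    refine le_of_tendsto hslope' ?_
    filter_upwards [hIoo] with x hx
    have h1 : 0 < h x := hpos x ⟨le_of_lt hx.1, hx.2⟩
    have h2 : x - x₀ < 0 := sub_neg.mpr hx.2
    have : slope h x₀ x = (h x - h x₀) / (x - x₀) := slope_def_field h x₀ x
    rw [this, heq0, sub_zero]
    exact le_of_lt (div_neg_of_pos_of_neg h1 h2)
  -- contradiction with ODE
  have hode := hODE x₀ hx₀mem
  rw [heq0] at hode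
  have hb1 : b * (1 - b) < 0 := mul_neg_of_neg_of_pos hb (by linarith)
  have hx₀1 : x₀ < 1 := lt_of_lt_of_le hx₀lt hz₀.2
  have hden : (0:ℝ) < (1 - x₀) ^ 2 := by nlinarith
  have hterm : b * (1 - b) / (1 - x₀) ^ 2 < 0 := div_neg_of_neg_of_pos hb1 hden
  have hlhs : x₀ * h' x₀ ≤ 0 := mul_nonpos_of_nonneg_of_nonpos hx₀0 hd_le
  nlinarith [hode, hterm, hlhs]
end

section
/- Let κ ∈ (0,4) and ρ ≥ (κ-4)/2, and let U₀(x) = ₂F₁(2ρ/κ, 1-4/κ; (2ρ+4)/κ; x) for x ∈ [0,1). Then U₀ has no zero on [0,1), U₀(x) > 0 on [0,1), and there exist constants C₂ > C₁ > 0 such that C₁ ≤ U₀(x) ≤ C₂ for all x ∈ [0,1). -/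
noncomputable section

/-- The rising factorial (Pochhammer symbol) `(x)ₙ = x(x+1)⋯(x+n-1)`. -/
def ascPoch (x : ℝ) (n : ℕ) : ℝ := ∏ i ∈ Finset.range n, (x + i)

/-- The Gauss hypergeometric function `₂F₁(a,b;c;x)`, defined by its power series. -/
def hyp2F1 (a b c x : ℝ) : ℝ :=
  ∑' n : ℕ, ascPoch a n * ascPoch b n / (ascPoch c n * (n.factorial : ℝ)) * x ^ n

namespace Stmt5Aux

/-- Coefficients of `₂F₁(a,b;c;·)`. -/
def coA (a b c : ℝ) (n : ℕ) : ℝ :=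
  ascPoch a n * ascPoch b n / (ascPoch c n * (n.factorial : ℝ))

/-- Coefficients of `(1-x)^{-s}`. -/
def coB (s : ℝ) (n : ℕ) : ℝ := ascPoch s n / (n.factorial : ℝ)

lemma ascPoch_succ (x : ℝ) (n : ℕ) : ascPoch x (n + 1) = ascPoch x n * (x + n) :=
  Finset.prod_range_succ _ _

lemma ascPoch_pos {x : ℝ} (hx : 0 < x) (n : ℕ) : 0 < ascPoch x n :=
  Finset.prod_pos fun i _ => by positivity

lemma coA_zero (a b c : ℝ) : coA a b c 0 = 1 := by
  simp [coA, ascPoch]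

lemma coB_zero (s : ℝ) : coB s 0 = 1 := by
  simp [coB, ascPoch]

lemma coB_succ (s : ℝ) (n : ℕ) :
    ((n : ℝ) + 1) * coB s (n + 1) = (s + n) * coB s n := by
  have hf : ((n.factorial : ℕ) : ℝ) ≠ 0 := Nat.cast_ne_zero.mpr n.factorial_ne_zero
  unfold coB
  rw [ascPoch_succ, Nat.factorial_succ]
  push_cast
  field_simp

lemma coA_succ {c : ℝ} (hc : 0 < c) (a b : ℝ) (n : ℕ) :
    (((n : ℝ) + 1) * (c + n)) * coA a b c (n + 1) = ((a + n) * (b + n)) * coA a b c n := by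
  have hf : ((n.factorial : ℕ) : ℝ) ≠ 0 := Nat.cast_ne_zero.mpr n.factorial_ne_zero
  have hpc : ascPoch c n ≠ 0 := ne_of_gt (ascPoch_pos hc n)
  have hcn : c + (n : ℝ) ≠ 0 := by positivity
  unfold coA
  rw [ascPoch_succ a, ascPoch_succ b, ascPoch_succ c, Nat.factorial_succ]
  push_cast
  field_simp

lemma coB_pos {s : ℝ} (hs : 0 < s) (n : ℕ) : 0 < coB s n :=
  div_pos (ascPoch_pos hs n) (by exact_mod_cast n.factorial_pos)

lemma coA_pos {a b c : ℝ} (ha : 0 < a) (hb : 0 < b) (hc : 0 < c) (n : ℕ) :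
    0 < coA a b c n :=
  div_pos (mul_pos (ascPoch_pos ha n) (ascPoch_pos hb n))
    (mul_pos (ascPoch_pos hc n) (by exact_mod_cast n.factorial_pos))

/-- Per-term telescoping identity (WZ certificate `G k = k(k-1+c) A_k B_{n+1-k}`). -/
lemma saal_term {a b c : ℝ} (hc : 0 < c) {n k : ℕ} (hk : k ≤ n) :
    (((n : ℝ) + 1) * ((n : ℝ) + c)) * (coA a b c k * coB (c - a - b) (n + 1 - k))
      - (((n : ℝ) + c - a) * ((n : ℝ) + c - b)) * (coA a b c k * coB (c - a - b) (n - k))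
    = (k : ℝ) * ((k : ℝ) - 1 + c) * (coA a b c k * coB (c - a - b) (n + 1 - k))
      - ((k : ℝ) + 1) * ((k : ℝ) + c) * (coA a b c (k + 1) * coB (c - a - b) (n - k)) := by
  have hnk : n + 1 - k = (n - k) + 1 := by omega
  have hcast : ((n - k : ℕ) : ℝ) = (n : ℝ) - (k : ℝ) := by
    rw [Nat.cast_sub hk]
  have e1 := coA_succ hc a b k
  have e2 := coB_succ (c - a - b) (n - k)
  rw [hcast] at e2
  rw [hnk]
  have hkn : (k : ℝ) ≤ (n : ℝ) := Nat.cast_le.mpr hk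
  have hpos : ((n : ℝ) - k + 1) ≠ 0 := by linarith
  apply mul_left_cancel₀ hpos
  linear_combination ((((n : ℝ) + 1) * ((n : ℝ) + c) - (k : ℝ) * ((k : ℝ) - 1 + c)))
      * coA a b c k * e2
    + ((n : ℝ) - k + 1) * coB (c - a - b) (n - k) * e1

/-- The first-order recurrence for the convolution. -/
lemma saal_step {a b c : ℝ} (hc : 0 < c) (n : ℕ) :
    (((n : ℝ) + 1) * ((n : ℝ) + c)) *
        ∑ k ∈ Finset.range (n + 2), coA a b c k * coB (c - a - b) (n + 1 - k)
      = (((n : ℝ) + c - a) * ((n : ℝ) + c - b)) *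
        ∑ k ∈ Finset.range (n + 1), coA a b c k * coB (c - a - b) (n - k) := by
  set Gf : ℕ → ℝ := fun k =>
    (k : ℝ) * ((k : ℝ) - 1 + c) * (coA a b c k * coB (c - a - b) (n + 1 - k)) with hGf
  have hterm : ∀ k ∈ Finset.range (n + 1),
      (((n : ℝ) + 1) * ((n : ℝ) + c)) * (coA a b c k * coB (c - a - b) (n + 1 - k))
        - (((n : ℝ) + c - a) * ((n : ℝ) + c - b)) * (coA a b c k * coB (c - a - b) (n - k))
      = Gf k - Gf (k + 1) := by
    intro k hk
    have hk' : k ≤ n := by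
      have := Finset.mem_range.mp hk; omega
    have h := saal_term (a := a) (b := b) hc hk'
    have hidx : n + 1 - (k + 1) = n - k := by omega
    simp only [hGf, hidx]
    push_cast
    linear_combination h
  have hsum : ∑ k ∈ Finset.range (n + 1),
      ((((n : ℝ) + 1) * ((n : ℝ) + c)) * (coA a b c k * coB (c - a - b) (n + 1 - k))
        - (((n : ℝ) + c - a) * ((n : ℝ) + c - b)) * (coA a b c k * coB (c - a - b) (n - k)))
      = Gf 0 - Gf (n + 1) := by
    rw [Finset.sum_congr rfl hterm]
    exact Finset.sum_range_sub' Gf (n + 1)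
  rw [Finset.sum_sub_distrib, ← Finset.mul_sum, ← Finset.mul_sum] at hsum
  have hG0 : Gf 0 = 0 := by simp [hGf]
  have hGn : Gf (n + 1) = (((n : ℝ) + 1) * ((n : ℝ) + c)) *
      (coA a b c (n + 1) * coB (c - a - b) 0) := by
    have hidx : n + 1 - (n + 1) = 0 := by omega
    simp only [hGf, hidx]
    push_cast
    ring
  have hfull : ∑ k ∈ Finset.range (n + 2), coA a b c k * coB (c - a - b) (n + 1 - k)
      = (∑ k ∈ Finset.range (n + 1), coA a b c k * coB (c - a - b) (n + 1 - k))
        + coA a b c (n + 1) * coB (c - a - b) 0 := by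
    rw [Finset.sum_range_succ]
    norm_num
  rw [hfull, mul_add]
  rw [hG0] at hsum
  linarith [hsum, hGn.le, hGn.ge]

/-- Pfaff–Saalschütz convolution identity:
the Cauchy product of `₂F₁(a,b;c;·)` and `(1-x)^{-(c-a-b)}` is `₂F₁(c-a,c-b;c;·)`. -/
lemma saalschutz {a b c : ℝ} (hc : 0 < c) (n : ℕ) :
    ∑ k ∈ Finset.range (n + 1), coA a b c k * coB (c - a - b) (n - k)
      = coA (c - a) (c - b) c n := by
  induction n with
  | zero => simp [coA, coB, ascPoch]
  | succ n ih =>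
    have hstep := saal_step (a := a) (b := b) hc n
    rw [ih] at hstep
    have e := coA_succ hc (c - a) (c - b) n
    have hne : (((n : ℝ) + 1) * ((n : ℝ) + c)) ≠ 0 := by positivity
    apply mul_left_cancel₀ hne
    calc (((n : ℝ) + 1) * ((n : ℝ) + c)) *
          ∑ k ∈ Finset.range (n + 1 + 1), coA a b c k * coB (c - a - b) (n + 1 - k)
        = (((n : ℝ) + c - a) * ((n : ℝ) + c - b)) * coA (c - a) (c - b) c n := hstep
      _ = (((n : ℝ) + 1) * ((n : ℝ) + c)) * coA (c - a) (c - b) c (n + 1) := by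
          linear_combination -e

/-- Polynomial growth bound for sequences with hypergeometric-type ratios. -/
lemma abs_le_pow_of_ratio (K : ℕ) (u : ℕ → ℝ) (h0 : |u 0| ≤ 1)
    (hstep : ∀ n : ℕ, ((n : ℝ) + 1) * |u (n + 1)| ≤ ((n : ℝ) + 1 + K) * |u n|) :
    ∀ n, |u n| ≤ ((n : ℝ) + 1) ^ K := by
  intro n
  induction n with
  | zero => simpa using h0
  | succ n ih =>
    have hN : (0 : ℝ) ≤ (n : ℝ) := Nat.cast_nonneg n
    have hb : ((n : ℝ) + 1 + K) * ((n : ℝ) + 1) ^ K ≤ ((n : ℝ) + 2) ^ K * ((n : ℝ) + 1) := by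
      have hbern : 1 + (K : ℝ) * (1 / ((n : ℝ) + 1)) ≤ (1 + 1 / ((n : ℝ) + 1)) ^ K := by
        apply one_add_mul_le_pow
        have h1 : (0 : ℝ) < 1 / ((n : ℝ) + 1) := by positivity
        linarith
      have hpow : ((n : ℝ) + 1) ^ K * (1 + 1 / ((n : ℝ) + 1)) ^ K = ((n : ℝ) + 2) ^ K := by
        rw [← mul_pow]
        congr 1
        field_simp
        ring
      have h1 : ((n : ℝ) + 1) ^ K * (1 + (K : ℝ) * (1 / ((n : ℝ) + 1)))
          ≤ ((n : ℝ) + 2) ^ K := by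
        rw [← hpow]
        exact mul_le_mul_of_nonneg_left hbern (by positivity)
      have h2 : ((n : ℝ) + 1) ^ K * (1 + (K : ℝ) * (1 / ((n : ℝ) + 1))) * ((n : ℝ) + 1)
          = ((n : ℝ) + 1 + K) * ((n : ℝ) + 1) ^ K := by
        field_simp
      nlinarith [pow_nonneg (by linarith : (0:ℝ) ≤ (n : ℝ) + 1) K]
    have h3 : ((n : ℝ) + 1) * |u (n + 1)| ≤ ((n : ℝ) + 1 + K) * ((n : ℝ) + 1) ^ K := by
      calc ((n : ℝ) + 1) * |u (n + 1)| ≤ ((n : ℝ) + 1 + K) * |u n| := hstep n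
        _ ≤ ((n : ℝ) + 1 + K) * ((n : ℝ) + 1) ^ K := by
            apply mul_le_mul_of_nonneg_left ih (by positivity)
    have h4 : ((n : ℝ) + 1) * |u (n + 1)| ≤ ((n : ℝ) + 2) ^ K * ((n : ℝ) + 1) :=
      le_trans h3 hb
    have h5 : |u (n + 1)| ≤ ((n : ℝ) + 2) ^ K := by
      have hp : (0 : ℝ) < (n : ℝ) + 1 := by positivity
      nlinarith
    have hcast : (((n + 1 : ℕ)) : ℝ) + 1 = (n : ℝ) + 2 := by push_cast; ring
    rw [hcast]
    exact h5

/-- Summability of `u n * x ^ n` for `|u n|` of polynomial growth and `x ∈ [0,1)`. -/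
lemma summable_abs_poly {x : ℝ} (hx0 : 0 ≤ x) (hx1 : x < 1) (K : ℕ) (u : ℕ → ℝ)
    (hb : ∀ n, |u n| ≤ ((n : ℝ) + 1) ^ K) :
    Summable fun n => |u n * x ^ n| := by
  have hgeo : Summable fun n : ℕ => (n : ℝ) ^ K * x ^ n := by
    apply summable_pow_mul_geometric_of_norm_lt_one
    rw [Real.norm_eq_abs, abs_of_nonneg hx0]; exact hx1
  have hgeo2 : Summable fun n : ℕ => x ^ n := summable_geometric_of_lt_one hx0 hx1
  have hmaj : Summable fun n : ℕ =>
      (2 : ℝ) ^ K * ((n : ℝ) ^ K * x ^ n) + (2 : ℝ) ^ K * x ^ n :=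
    Summable.add (hgeo.mul_left _) (hgeo2.mul_left _)
  apply Summable.of_nonneg_of_le (fun n => abs_nonneg _) _ hmaj
  intro n
  have hxn : (0 : ℝ) ≤ x ^ n := pow_nonneg hx0 n
  have h1 : |u n * x ^ n| = |u n| * x ^ n := by
    rw [abs_mul, abs_of_nonneg hxn]
  have h2 : ((n : ℝ) + 1) ^ K ≤ (2 : ℝ) ^ K * ((n : ℝ) ^ K + 1) := by
    rcases Nat.eq_zero_or_pos n with hn | hn
    · subst hn
      simp only [Nat.cast_zero, zero_add, one_pow]
      have h3 : (1 : ℝ) ≤ 2 ^ K := one_le_pow₀ (by norm_num)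
      nlinarith [h3, mul_nonneg (pow_nonneg (by norm_num : (0:ℝ) ≤ 2) K)
        (pow_nonneg (le_refl (0:ℝ)) K)]
    · have hn1 : (1 : ℝ) ≤ (n : ℝ) := by exact_mod_cast hn
      have h3 : ((n : ℝ) + 1) ^ K ≤ (2 * (n : ℝ)) ^ K := by
        apply pow_le_pow_left₀ (by linarith) (by linarith)
      rw [mul_pow] at h3
      nlinarith [pow_nonneg (by norm_num : (0:ℝ) ≤ 2) K,
        pow_nonneg (by linarith : (0:ℝ) ≤ (n : ℝ)) K]
  calc |u n * x ^ n| = |u n| * x ^ n := h1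
    _ ≤ ((n : ℝ) + 1) ^ K * x ^ n := mul_le_mul_of_nonneg_right (hb n) hxn
    _ ≤ ((2 : ℝ) ^ K * ((n : ℝ) ^ K + 1)) * x ^ n := mul_le_mul_of_nonneg_right h2 hxn
    _ = (2 : ℝ) ^ K * ((n : ℝ) ^ K * x ^ n) + (2 : ℝ) ^ K * x ^ n := by ring

end Stmt5Aux

open Stmt5Aux in
set_option maxHeartbeats 1000000 in
/-- Main auxiliary result: uniform two-sided positive bounds for `₂F₁(a,b;c;x)` on `[0,1)`
when `c ≥ 1`, `c - a > 0`, `c - b > 0`, `c - a - b > 0`. -/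
theorem hyp2F1_bounds (a b c : ℝ) (hc1 : 1 ≤ c) (hca : 0 < c - a) (hcb : 0 < c - b)
    (hs : 0 < c - a - b) :
    ∃ C₁ C₂ : ℝ, 0 < C₁ ∧ C₁ < C₂ ∧
      ∀ x ∈ Set.Ico (0 : ℝ) 1, C₁ ≤ hyp2F1 a b c x ∧ hyp2F1 a b c x ≤ C₂ := by
  have hc0 : 0 < c := lt_of_lt_of_le one_pos hc1
  have hm : 0 < min (min c (c - a - b)) (min (c - a) (c - b)) :=
    lt_min (lt_min hc0 hs) (lt_min hca hcb)
  set m : ℝ := min (min c (c - a - b)) (min (c - a) (c - b)) with hm_def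
  have hmc : m ≤ c := le_trans (min_le_left _ _) (min_le_left _ _)
  have hms : m ≤ c - a - b := le_trans (min_le_left _ _) (min_le_right _ _)
  have hmca : m ≤ c - a := le_trans (min_le_right _ _) (min_le_left _ _)
  have hmcb : m ≤ c - b := le_trans (min_le_right _ _) (min_le_right _ _)
  -- the summable weight sequence
  set w : ℕ → ℝ := fun j => |a * b| / (((j : ℝ) + m) * ((j : ℝ) + m)) with hw_def
  have hw0 : ∀ j, 0 ≤ w j := by
    intro j
    have hj : 0 < ((j : ℝ) + m) * ((j : ℝ) + m) := by positivity
    exact div_nonneg (abs_nonneg _) hj.le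
  have hwsum : Summable w := by
    have hm' : 0 < min m 1 := lt_min hm one_pos
    set m' : ℝ := min m 1 with hm'_def
    have hm'1 : m' ≤ 1 := min_le_right _ _
    have hm'm : m' ≤ m := min_le_left _ _
    have base : Summable fun j : ℕ => 1 / ((j : ℝ) + 1) ^ 2 := by
      have h := Real.summable_one_div_nat_pow (p := 2) |>.mpr one_lt_two
      have h2 := (summable_nat_add_iff (f := fun n : ℕ => 1 / (n : ℝ) ^ 2) 1).mpr h
      apply h2.congr
      intro j
      push_cast
      ring
    apply Summable.of_nonneg_of_le hw0 _ (base.mul_left (|a * b| / (m' * m')))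
    intro j
    have hj : (0 : ℝ) ≤ (j : ℝ) := Nat.cast_nonneg j
    have hden1 : m' * ((j : ℝ) + 1) ≤ (j : ℝ) + m := by nlinarith
    have hden2 : (m' * ((j : ℝ) + 1)) * (m' * ((j : ℝ) + 1))
        ≤ ((j : ℝ) + m) * ((j : ℝ) + m) :=
      mul_le_mul hden1 hden1 (by positivity) (by positivity)
    have hpos2 : (0 : ℝ) < (m' * ((j : ℝ) + 1)) * (m' * ((j : ℝ) + 1)) := by positivity
    calc w j ≤ |a * b| / ((m' * ((j : ℝ) + 1)) * (m' * ((j : ℝ) + 1))) :=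
          div_le_div_of_nonneg_left (abs_nonneg _) hpos2 hden2
      _ = |a * b| / (m' * m') * (1 / ((j : ℝ) + 1) ^ 2) := by
          rw [div_mul_div_comm, mul_one]
          congr 1
          ring
  set M : ℝ := ∑' j, w j with hM_def
  have hM0 : 0 ≤ M := tsum_nonneg hw0
  have hMn : ∀ n, ∑ j ∈ Finset.range n, w j ≤ M := fun n =>
    Summable.sum_le_tsum _ (fun j _ => hw0 j) hwsum
  -- factor bounds
  have hfac : ∀ n : ℕ,
      ((c - a + (n : ℝ)) * (c - b + (n : ℝ)) ≤
        Real.exp (w n) * ((c + (n : ℝ)) * ((c - a - b) + (n : ℝ)))) ∧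
      ((c + (n : ℝ)) * ((c - a - b) + (n : ℝ)) ≤
        Real.exp (w n) * ((c - a + (n : ℝ)) * (c - b + (n : ℝ)))) := by
    intro n
    have hN : (0 : ℝ) ≤ (n : ℝ) := Nat.cast_nonneg n
    have hmn : (0 : ℝ) < ((n : ℝ) + m) * ((n : ℝ) + m) := by positivity
    have hD : ((n : ℝ) + m) * ((n : ℝ) + m)
        ≤ (c + (n : ℝ)) * ((c - a - b) + (n : ℝ)) := by nlinarith
    have hE : ((n : ℝ) + m) * ((n : ℝ) + m)
        ≤ (c - a + (n : ℝ)) * (c - b + (n : ℝ)) := by nlinarith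
    have hwval : w n * (((n : ℝ) + m) * ((n : ℝ) + m)) = |a * b| :=
      div_mul_cancel₀ _ (ne_of_gt hmn)
    have hexp : 1 + w n ≤ Real.exp (w n) := by
      have h := Real.add_one_le_exp (w n); linarith
    have hab1 : a * b ≤ |a * b| := le_abs_self _
    have hab2 : -|a * b| ≤ a * b := neg_abs_le _
    have hid : (c - a + (n : ℝ)) * (c - b + (n : ℝ))
        = (c + (n : ℝ)) * ((c - a - b) + (n : ℝ)) + a * b := by ring
    have hwn := hw0 n
    constructor
    · nlinarith [mul_le_mul_of_nonneg_left hD hwn,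
        mul_le_mul_of_nonneg_right hexp (le_trans hmn.le hD)]
    · nlinarith [mul_le_mul_of_nonneg_left hE hwn,
        mul_le_mul_of_nonneg_right hexp (le_trans hmn.le hE)]
  -- two-sided coefficient bounds by induction
  have hCB : ∀ n : ℕ,
      Real.exp (-(∑ j ∈ Finset.range n, w j)) * coB (c - a - b) n
        ≤ coA (c - a) (c - b) c n ∧
      coA (c - a) (c - b) c n
        ≤ Real.exp (∑ j ∈ Finset.range n, w j) * coB (c - a - b) n := by
    intro n
    induction n with
    | zero => simp [coA, coB, ascPoch]
    | succ n ih =>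
      obtain ⟨ihl, ihr⟩ := ih
      have hN : (0 : ℝ) ≤ (n : ℝ) := Nat.cast_nonneg n
      have hBpos : 0 < coB (c - a - b) n := coB_pos hs n
      have hB1pos : 0 < coB (c - a - b) (n + 1) := coB_pos hs (n + 1)
      have hCpos : 0 < coA (c - a) (c - b) c n := coA_pos hca hcb hc0 n
      have eC := coA_succ hc0 (c - a) (c - b) n
      have eB := coB_succ (c - a - b) n
      have hQ : (0 : ℝ) < ((n : ℝ) + 1) * (c + n) := by positivity
      have hSn : ∑ j ∈ Finset.range (n + 1), w j = (∑ j ∈ Finset.range n, w j) + w n :=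
        Finset.sum_range_succ w n
      obtain ⟨hf1, hf2⟩ := hfac n
      constructor
      · -- lower bound
        rw [hSn]
        refine le_of_mul_le_mul_left ?_ hQ
        have hf2' : Real.exp (-(w n)) * ((c + (n : ℝ)) * ((c - a - b) + (n : ℝ)))
            ≤ (c - a + (n : ℝ)) * (c - b + (n : ℝ)) := by
          have h := mul_le_mul_of_nonneg_left hf2 (Real.exp_nonneg (-(w n)))
          have h2 : Real.exp (-(w n)) * (Real.exp (w n) *
              ((c - a + (n : ℝ)) * (c - b + (n : ℝ))))
              = (c - a + (n : ℝ)) * (c - b + (n : ℝ)) := by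
            rw [← mul_assoc, ← Real.exp_add]
            simp
          linarith [h, h2.le, h2.ge]
        have key : (Real.exp (-(w n)) * ((c + (n : ℝ)) * ((c - a - b) + (n : ℝ))))
              * (Real.exp (-(∑ j ∈ Finset.range n, w j)) * coB (c - a - b) n)
            ≤ ((c - a + (n : ℝ)) * (c - b + (n : ℝ))) * coA (c - a) (c - b) c n :=
          mul_le_mul hf2' ihl (by positivity) (by positivity)
        calc (((n : ℝ) + 1) * (c + n)) *
              (Real.exp (-((∑ j ∈ Finset.range n, w j) + w n)) * coB (c - a - b) (n + 1))
            = (Real.exp (-(w n)) * ((c + (n : ℝ)) * ((c - a - b) + (n : ℝ))))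
              * (Real.exp (-(∑ j ∈ Finset.range n, w j)) * coB (c - a - b) n) := by
              rw [neg_add, Real.exp_add]
              linear_combination ((c + (n : ℝ)) * Real.exp (-(∑ j ∈ Finset.range n, w j))
                * Real.exp (-(w n))) * eB
          _ ≤ ((c - a + (n : ℝ)) * (c - b + (n : ℝ))) * coA (c - a) (c - b) c n := key
          _ = (((n : ℝ) + 1) * (c + n)) * coA (c - a) (c - b) c (n + 1) := by
              linear_combination -eC
      · -- upper bound
        rw [hSn]
        refine le_of_mul_le_mul_left ?_ hQ
        have key : ((c - a + (n : ℝ)) * (c - b + (n : ℝ))) * coA (c - a) (c - b) c n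
            ≤ (Real.exp (w n) * ((c + (n : ℝ)) * ((c - a - b) + (n : ℝ))))
              * (Real.exp (∑ j ∈ Finset.range n, w j) * coB (c - a - b) n) :=
          mul_le_mul hf1 ihr hCpos.le (by positivity)
        calc (((n : ℝ) + 1) * (c + n)) * coA (c - a) (c - b) c (n + 1)
            = ((c - a + (n : ℝ)) * (c - b + (n : ℝ))) * coA (c - a) (c - b) c n := eC
          _ ≤ (Real.exp (w n) * ((c + (n : ℝ)) * ((c - a - b) + (n : ℝ))))
              * (Real.exp (∑ j ∈ Finset.range n, w j) * coB (c - a - b) n) := key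
          _ = (((n : ℝ) + 1) * (c + n)) *
              (Real.exp ((∑ j ∈ Finset.range n, w j) + w n) * coB (c - a - b) (n + 1)) := by
              rw [Real.exp_add]
              linear_combination (-(c + (n : ℝ)) * Real.exp (∑ j ∈ Finset.range n, w j)
                * Real.exp (w n)) * eB
  -- relaxed uniform bounds
  have hlowC : ∀ n, Real.exp (-M) * coB (c - a - b) n ≤ coA (c - a) (c - b) c n := by
    intro n
    refine le_trans ?_ (hCB n).1
    apply mul_le_mul_of_nonneg_right _ (coB_pos hs n).le
    exact Real.exp_le_exp.mpr (neg_le_neg (hMn n))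
  have hupC : ∀ n, coA (c - a) (c - b) c n ≤ Real.exp M * coB (c - a - b) n := by
    intro n
    refine le_trans (hCB n).2 ?_
    apply mul_le_mul_of_nonneg_right _ (coB_pos hs n).le
    exact Real.exp_le_exp.mpr (hMn n)
  -- polynomial growth of the coefficients
  set K₁ : ℕ := ⌈|a| + |b| + |a| * |b|⌉₊ with hK₁_def
  have hK1 : |a| + |b| + |a| * |b| ≤ (K₁ : ℝ) := Nat.le_ceil _
  have hAstep : ∀ n : ℕ, ((n : ℝ) + 1) * |coA a b c (n + 1)|
      ≤ ((n : ℝ) + 1 + K₁) * |coA a b c n| := by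
    intro n
    have hN : (0 : ℝ) ≤ (n : ℝ) := Nat.cast_nonneg n
    have hQ : (0 : ℝ) < ((n : ℝ) + 1) * (c + n) := by positivity
    have e := coA_succ hc0 a b n
    have h1 : |(((n : ℝ) + 1) * (c + n)) * coA a b c (n + 1)|
        = (((n : ℝ) + 1) * (c + n)) * |coA a b c (n + 1)| := by
      rw [abs_mul, abs_of_pos hQ]
    have h2 : |((a + (n : ℝ)) * (b + n)) * coA a b c n|
        = |a + (n : ℝ)| * |b + (n : ℝ)| * |coA a b c n| := by
      rw [abs_mul, abs_mul]
    have habs : (((n : ℝ) + 1) * (c + n)) * |coA a b c (n + 1)|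
        = |a + (n : ℝ)| * |b + (n : ℝ)| * |coA a b c n| := by
      rw [← h1, e, h2]
    have ha' : |a + (n : ℝ)| ≤ |a| + n := by
      have h := abs_add_le a ((n : ℝ))
      have hn : |(n : ℝ)| = (n : ℝ) := abs_of_nonneg hN
      rw [hn] at h; exact h
    have hb' : |b + (n : ℝ)| ≤ |b| + n := by
      have h := abs_add_le b ((n : ℝ))
      have hn : |(n : ℝ)| = (n : ℝ) := abs_of_nonneg hN
      rw [hn] at h; exact h
    have hmid : (|a| + (n : ℝ)) * (|b| + n) ≤ ((n : ℝ) + 1) * ((n : ℝ) + 1 + K₁) := by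
      nlinarith [hK1, abs_nonneg a, abs_nonneg b, hN,
        mul_nonneg (abs_nonneg a) (abs_nonneg b),
        mul_le_mul_of_nonneg_right
          (show |a| + |b| ≤ (K₁ : ℝ) + 2 by nlinarith [mul_nonneg (abs_nonneg a) (abs_nonneg b)])
          hN]
    have hc' : (0 : ℝ) < c + n := by linarith
    refine le_of_mul_le_mul_left ?_ hc'
    calc (c + (n : ℝ)) * (((n : ℝ) + 1) * |coA a b c (n + 1)|)
        = (((n : ℝ) + 1) * (c + n)) * |coA a b c (n + 1)| := by ring
      _ = |a + (n : ℝ)| * |b + (n : ℝ)| * |coA a b c n| := habs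
      _ ≤ ((|a| + (n : ℝ)) * (|b| + (n : ℝ))) * |coA a b c n| := by
          apply mul_le_mul_of_nonneg_right _ (abs_nonneg _)
          exact mul_le_mul ha' hb' (abs_nonneg _) (by positivity)
      _ ≤ (((n : ℝ) + 1) * ((n : ℝ) + 1 + K₁)) * |coA a b c n| :=
          mul_le_mul_of_nonneg_right hmid (abs_nonneg _)
      _ ≤ (c + (n : ℝ)) * (((n : ℝ) + 1 + K₁) * |coA a b c n|) := by
          nlinarith [abs_nonneg (coA a b c n),
            mul_nonneg (show (0:ℝ) ≤ (n : ℝ) + 1 + K₁ by positivity) (abs_nonneg (coA a b c n))]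
  have hApoly : ∀ n, |coA a b c n| ≤ ((n : ℝ) + 1) ^ K₁ :=
    abs_le_pow_of_ratio K₁ _ (by simp [coA_zero]) hAstep
  set K₂ : ℕ := ⌈c - a - b⌉₊ with hK₂_def
  have hK2 : c - a - b ≤ (K₂ : ℝ) := Nat.le_ceil _
  have hBstep : ∀ n : ℕ, ((n : ℝ) + 1) * |coB (c - a - b) (n + 1)|
      ≤ ((n : ℝ) + 1 + K₂) * |coB (c - a - b) n| := by
    intro n
    have hN : (0 : ℝ) ≤ (n : ℝ) := Nat.cast_nonneg n
    rw [abs_of_pos (coB_pos hs (n + 1)), abs_of_pos (coB_pos hs n), coB_succ]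
    apply mul_le_mul_of_nonneg_right _ (coB_pos hs n).le
    linarith
  have hBpoly : ∀ n, |coB (c - a - b) n| ≤ ((n : ℝ) + 1) ^ K₂ :=
    abs_le_pow_of_ratio K₂ _ (by simp [coB_zero]) hBstep
  -- main argument for each x
  refine ⟨Real.exp (-M), Real.exp M + 1, Real.exp_pos _, ?_, ?_⟩
  · have h := Real.exp_le_exp.mpr (show -M ≤ M by linarith)
    linarith
  intro x hx
  obtain ⟨hx0, hx1⟩ := hx
  have hSA : Summable fun n => |coA a b c n * x ^ n| :=
    summable_abs_poly hx0 hx1 K₁ _ hApoly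
  have hSB : Summable fun n => |coB (c - a - b) n * x ^ n| :=
    summable_abs_poly hx0 hx1 K₂ _ hBpoly
  have hSAplain : Summable fun n => coA a b c n * x ^ n := summable_abs_iff.mp hSA
  have hSBplain : Summable fun n => coB (c - a - b) n * x ^ n := summable_abs_iff.mp hSB
  have hSC : Summable fun n => coA (c - a) (c - b) c n * x ^ n := by
    apply Summable.of_nonneg_of_le
      (fun n => mul_nonneg (coA_pos hca hcb hc0 n).le (pow_nonneg hx0 n))
      _ (hSBplain.mul_left (Real.exp M))
    intro n
    calc coA (c - a) (c - b) c n * x ^ n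
        ≤ (Real.exp M * coB (c - a - b) n) * x ^ n :=
          mul_le_mul_of_nonneg_right (hupC n) (pow_nonneg hx0 n)
      _ = Real.exp M * (coB (c - a - b) n * x ^ n) := by ring
  have hnormA : Summable fun n => ‖coA a b c n * x ^ n‖ := by
    simp only [Real.norm_eq_abs]; exact hSA
  have hnormB : Summable fun n => ‖coB (c - a - b) n * x ^ n‖ := by
    simp only [Real.norm_eq_abs]; exact hSB
  have hprod := tsum_mul_tsum_eq_tsum_sum_range_of_summable_norm hnormA hnormB
  have hconv : ∀ n : ℕ, ∑ k ∈ Finset.range (n + 1),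
      (coA a b c k * x ^ k) * (coB (c - a - b) (n - k) * x ^ (n - k))
      = coA (c - a) (c - b) c n * x ^ n := by
    intro n
    have h1 : ∀ k ∈ Finset.range (n + 1),
        (coA a b c k * x ^ k) * (coB (c - a - b) (n - k) * x ^ (n - k))
        = (coA a b c k * coB (c - a - b) (n - k)) * x ^ n := by
      intro k hk
      have hk' : k ≤ n := by
        have := Finset.mem_range.mp hk; omega
      have hxx : x ^ k * x ^ (n - k) = x ^ n := by
        rw [← pow_add]
        congr 1
        omega
      calc (coA a b c k * x ^ k) * (coB (c - a - b) (n - k) * x ^ (n - k))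
          = (coA a b c k * coB (c - a - b) (n - k)) * (x ^ k * x ^ (n - k)) := by ring
        _ = (coA a b c k * coB (c - a - b) (n - k)) * x ^ n := by rw [hxx]
    rw [Finset.sum_congr rfl h1, ← Finset.sum_mul, saalschutz hc0 n]
  rw [tsum_congr hconv] at hprod
  -- hprod : (∑' A x^n) * (∑' B x^n) = ∑' C x^n
  have hSB1 : (1 : ℝ) ≤ ∑' n, coB (c - a - b) n * x ^ n := by
    have h0 : coB (c - a - b) 0 * x ^ 0 = 1 := by simp [coB_zero]
    calc (1 : ℝ) = coB (c - a - b) 0 * x ^ 0 := h0.symm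
      _ ≤ ∑' n, coB (c - a - b) n * x ^ n :=
          Summable.le_tsum hSBplain 0
            (fun j _ => mul_nonneg (coB_pos hs j).le (pow_nonneg hx0 j))
  have hSBpos : (0 : ℝ) < ∑' n, coB (c - a - b) n * x ^ n := lt_of_lt_of_le one_pos hSB1
  have hlow' : Real.exp (-M) * (∑' n, coB (c - a - b) n * x ^ n)
      ≤ ∑' n, coA (c - a) (c - b) c n * x ^ n := by
    rw [← tsum_mul_left]
    apply Summable.tsum_le_tsum _ (hSBplain.mul_left _) hSC
    intro n
    calc Real.exp (-M) * (coB (c - a - b) n * x ^ n)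
        = (Real.exp (-M) * coB (c - a - b) n) * x ^ n := by ring
      _ ≤ coA (c - a) (c - b) c n * x ^ n :=
          mul_le_mul_of_nonneg_right (hlowC n) (pow_nonneg hx0 n)
  have hup' : (∑' n, coA (c - a) (c - b) c n * x ^ n)
      ≤ Real.exp M * (∑' n, coB (c - a - b) n * x ^ n) := by
    rw [← tsum_mul_left]
    apply Summable.tsum_le_tsum _ hSC (hSBplain.mul_left _)
    intro n
    calc coA (c - a) (c - b) c n * x ^ n
        ≤ (Real.exp M * coB (c - a - b) n) * x ^ n :=
          mul_le_mul_of_nonneg_right (hupC n) (pow_nonneg hx0 n)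
      _ = Real.exp M * (coB (c - a - b) n * x ^ n) := by ring
  have hUeq : hyp2F1 a b c x = ∑' n, coA a b c n * x ^ n := rfl
  constructor
  · rw [hUeq]
    refine le_of_mul_le_mul_right ?_ hSBpos
    rw [hprod]
    exact hlow'
  · rw [hUeq]
    have h := le_of_mul_le_mul_right (le_trans hprod.le hup') hSBpos
    linarith

/-- For `κ ∈ (0,4)` and `ρ ≥ (κ-4)/2`, the function
`U₀(x) = ₂F₁(2ρ/κ, 1-4/κ; (2ρ+4)/κ; x)` has no zero on `[0,1)`, is positive on `[0,1)`,
and is bounded between two positive constants `C₁ ≤ U₀ ≤ C₂` on `[0,1)`. -/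
theorem stmt5 (κ ρ : ℝ) (hκ0 : 0 < κ) (hκ4 : κ < 4) (hρ : (κ - 4) / 2 ≤ ρ)
    (U₀ : ℝ → ℝ) (hU₀ : ∀ x, U₀ x = hyp2F1 (2 * ρ / κ) (1 - 4 / κ) ((2 * ρ + 4) / κ) x) :
    (∀ x ∈ Set.Ico (0:ℝ) 1, U₀ x ≠ 0) ∧ (∀ x ∈ Set.Ico (0:ℝ) 1, 0 < U₀ x) ∧
    ∃ C₁ C₂ : ℝ, 0 < C₁ ∧ C₁ < C₂ ∧ ∀ x ∈ Set.Ico (0:ℝ) 1, C₁ ≤ U₀ x ∧ U₀ x ≤ C₂ := by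
  have hκ : κ ≠ 0 := ne_of_gt hκ0
  set a : ℝ := 2 * ρ / κ with ha_def
  set b : ℝ := 1 - 4 / κ with hb_def
  set c : ℝ := (2 * ρ + 4) / κ with hc_def
  have hc1 : 1 ≤ c := by
    rw [hc_def, le_div_iff₀ hκ0]
    linarith
  have hca : 0 < c - a := by
    have heq : c - a = 4 / κ := by
      rw [hc_def, ha_def, div_sub_div_same]
      congr 1
      ring
    rw [heq]
    positivity
  have hcb : 0 < c - b := by
    have heq : c - b = (2 * ρ + 8 - κ) / κ := by
      rw [hc_def, hb_def]
      field_simp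
      ring
    rw [heq]
    apply div_pos _ hκ0
    linarith
  have hs : 0 < c - a - b := by
    have heq : c - a - b = (8 - κ) / κ := by
      rw [hc_def, ha_def, hb_def]
      field_simp
      ring
    rw [heq]
    apply div_pos _ hκ0
    linarith
  obtain ⟨C₁, C₂, hC₁, hC₁₂, hbound⟩ := hyp2F1_bounds a b c hc1 hca hcb hs
  refine ⟨?_, ?_, C₁, C₂, hC₁, hC₁₂, ?_⟩
  · intro x hx
    have h := (hbound x hx).1
    rw [hU₀ x]
    exact ne_of_gt (lt_of_lt_of_le hC₁ h)
  · intro x hx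
    have h := (hbound x hx).1
    rw [hU₀ x]
    exact lt_of_lt_of_le hC₁ h
  · intro x hx
    rw [hU₀ x]
    exact hbound x hx
end
end

section
/- Let κ ∈ (0,4), ρ ≥ (κ-4)/2, a = 2ρ/κ, b = 1-4/κ, c = (2ρ+4)/κ, and let U₀ be a positive solution of the hypergeometric equation x(x-1)U₀'' + [(a+b+1)x - c]U₀' + ab·U₀ = 0 on (0,1). Define V₀(x) = x^{ρ/κ}·U₀(x) and g₀(x) = ρ + κ·x·U₀'(x)/U₀(x). Then for all x ∈ (0,1), (κ/2)·(V₀''(x)/V₀(x))·x² = [(2 - κ/2)·(x+1)/(x-1) - κ/2]·(g₀(x)/κ) - ρ(κ-4-ρ)/(2κ). -/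
/-- Let `κ ∈ (0,4)`, `ρ ≥ (κ-4)/2`, `a = 2ρ/κ`, `b = 1-4/κ`, `c = (2ρ+4)/κ`,
and let `U₀` be a positive twice continuously differentiable solution of the hypergeometric
equation on `(0,1)`. With `V₀(x) = x^(ρ/κ) U₀(x)` and `g₀(x) = ρ + κ x U₀'(x)/U₀(x)`,
for all `x ∈ (0,1)`:
`(κ/2)·(V₀''(x)/V₀(x))·x² = [(2-κ/2)(x+1)/(x-1) - κ/2]·(g₀(x)/κ) - ρ(κ-4-ρ)/(2κ)`. -/
theorem stmt10 (κ ρ : ℝ) (hκ0 : 0 < κ) (hκ4 : κ < 4) (hρ : (κ - 4) / 2 ≤ ρ)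
    (a b c : ℝ) (ha : a = 2 * ρ / κ) (hb : b = 1 - 4 / κ) (hc : c = (2 * ρ + 4) / κ)
    (U₀ V₀ g₀ : ℝ → ℝ)
    (hU₀_smooth : ContDiffOn ℝ 2 U₀ (Set.Ioo (0:ℝ) 1))
    (hU₀_pos : ∀ x ∈ Set.Ioo (0:ℝ) 1, 0 < U₀ x)
    (hODE : ∀ x ∈ Set.Ioo (0:ℝ) 1,
      x * (x - 1) * deriv (deriv U₀) x + ((a + b + 1) * x - c) * deriv U₀ x
        + a * b * U₀ x = 0)
    (hV₀ : ∀ x ∈ Set.Ioo (0:ℝ) 1, V₀ x = x ^ (ρ / κ) * U₀ x)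
    (hg₀ : ∀ x ∈ Set.Ioo (0:ℝ) 1, g₀ x = ρ + κ * x * deriv U₀ x / U₀ x) :
    ∀ x ∈ Set.Ioo (0:ℝ) 1,
      (κ / 2) * (deriv (deriv V₀) x / V₀ x) * x ^ 2
        = ((2 - κ / 2) * (x + 1) / (x - 1) - κ / 2) * (g₀ x / κ)
          - ρ * (κ - 4 - ρ) / (2 * κ) := by

  intro x hx
  obtain ⟨hx0, hx1⟩ := hx
  have hmem : Set.Ioo (0:ℝ) 1 ∈ nhds x := isOpen_Ioo.mem_nhds ⟨hx0, hx1⟩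
  have hκ : κ ≠ 0 := ne_of_gt hκ0
  set p := ρ / κ with hp
  have hUdiff : ∀ y ∈ Set.Ioo (0:ℝ) 1, HasDerivAt U₀ (deriv U₀ y) y := by
    intro y hy
    exact ((hU₀_smooth.differentiableOn (by norm_num)).differentiableAt
      (isOpen_Ioo.mem_nhds hy)).hasDerivAt
  have hU1 : ContDiffOn ℝ 1 (deriv U₀) (Set.Ioo 0 1) :=
    hU₀_smooth.deriv_of_isOpen isOpen_Ioo (by norm_num)
  have hddU : HasDerivAt (deriv U₀) (deriv (deriv U₀) x) x :=
    ((hU1.differentiableOn one_ne_zero).differentiableAt hmem).hasDerivAt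
  set F : ℝ → ℝ := fun y => p * y ^ (p - 1) * U₀ y + y ^ p * deriv U₀ y with hF
  have hVF : ∀ y ∈ Set.Ioo (0:ℝ) 1, HasDerivAt V₀ (F y) y := by
    intro y hy
    have h1 : HasDerivAt (fun t : ℝ => t ^ p * U₀ t)
        (p * y ^ (p - 1) * U₀ y + y ^ p * deriv U₀ y) y :=
      (Real.hasDerivAt_rpow_const (Or.inl hy.1.ne')).mul (hUdiff y hy)
    exact h1.congr_of_eventuallyEq
      (by filter_upwards [isOpen_Ioo.mem_nhds hy] with z hz using hV₀ z hz)
  have hEq : deriv V₀ =ᶠ[nhds x] F := by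
    filter_upwards [hmem] with z hz using (hVF z hz).deriv
  have hF' : HasDerivAt F
      (p * ((p - 1) * x ^ (p - 1 - 1)) * U₀ x + p * x ^ (p - 1) * deriv U₀ x
        + (p * x ^ (p - 1) * deriv U₀ x + x ^ p * deriv (deriv U₀) x)) x := by
    have h1 : HasDerivAt (fun y : ℝ => p * y ^ (p - 1))
        (p * ((p - 1) * x ^ (p - 1 - 1))) x :=
      (Real.hasDerivAt_rpow_const (Or.inl hx0.ne')).const_mul p
    exact (h1.mul (hUdiff x ⟨hx0, hx1⟩)).add
      ((Real.hasDerivAt_rpow_const (Or.inl hx0.ne')).mul hddU)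
  have hddV : deriv (deriv V₀) x
      = p * ((p - 1) * x ^ (p - 1 - 1)) * U₀ x + p * x ^ (p - 1) * deriv U₀ x
        + (p * x ^ (p - 1) * deriv U₀ x + x ^ p * deriv (deriv U₀) x) := by
    rw [hEq.deriv_eq, hF'.deriv]
  have hx1' : x - 1 ≠ 0 := sub_ne_zero.mpr (ne_of_lt hx1)
  have hu : U₀ x ≠ 0 := (hU₀_pos x ⟨hx0, hx1⟩).ne'
  have hA : (0:ℝ) < x ^ p := Real.rpow_pos_of_pos hx0 p
  have h1 : x ^ (p - 1) = x ^ p / x := by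
    rw [Real.rpow_sub hx0, Real.rpow_one]
  have h2 : x ^ (p - 1 - 1) = x ^ p / x / x := by
    rw [Real.rpow_sub hx0, Real.rpow_sub hx0, Real.rpow_one]
  have hode := hODE x ⟨hx0, hx1⟩
  have hu'' : deriv (deriv U₀) x
      = (-((a + b + 1) * x - c) * deriv U₀ x - a * b * U₀ x) / (x * (x - 1)) := by
    field_simp
    linarith [hode]
  rw [hddV, hV₀ x ⟨hx0, hx1⟩, hg₀ x ⟨hx0, hx1⟩, h1, h2, hu'']
  subst ha hb hc
  rw [hp] at *
  clear_value p
  field_simp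
  ring
end
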